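/- Let Σ be a random element of 𝒦(ℍ) with a unique Fréchet mean Ξ ∈ 𝒦. If, with positive probability, Σ ≻ 0 and the optimal map T_Ξ^Σ exists as a bounded operator that is invertible with bounded inverse (in particular ‖T_Ξ^Σ h‖ ≥ c‖h‖ for all h and some c > 0), then Ξ ≻ 0. -/

import Mathlib

open MeasureTheory ProbabilityTheory Filter ContinuousLinearMap
open scoped RealInnerProductSpace NNReal ENNReal Topology

noncomputable section

namespace BuresWasserstein

variable (H : Type*) [NormedAddCommGroup H] [InnerProductSpace ℝ H] [CompleteSpace H]

/-- A fixed orthonormal (Hilbert) basis of `H`, used to define traces. -/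
def basisIndex : Set H := (exists_hilbertBasis ℝ H).choose

/-- The fixed Hilbert basis of `H`. -/
def hbasis : HilbertBasis (basisIndex H) ℝ H := (exists_hilbertBasis ℝ H).choose_spec.choose

variable {H}

/-- The trace of a bounded operator, computed in the fixed basis
(junk value if the family is not summable). -/
def trOp (F : H →L[ℝ] H) : ℝ := ∑' i : basisIndex H, ⟪F (hbasis H i), hbasis H i⟫

/-- The unique non-negative square root of a non-negative operator
(junk value `0` if no non-negative square root exists). -/
def sqrtOp (F : H →L[ℝ] H) : H →L[ℝ] H := by
  classical exact if h : ∃ S : H →L[ℝ] H, S.IsPositive ∧ S ∘L S = F then h.choose else 0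

/-- The absolute value `|F| = (F*F)^{1/2}` of an operator. -/
def absOp (F : H →L[ℝ] H) : H →L[ℝ] H := sqrtOp ((ContinuousLinearMap.adjoint F) ∘L F)

/-- The trace norm `‖F‖₁ = tr |F|`. -/
def traceNorm (F : H →L[ℝ] H) : ℝ := trOp (absOp F)

/-- The Hilbert--Schmidt norm `‖F‖₂ = (tr (F*F))^{1/2}`. -/
def hsNorm (F : H →L[ℝ] H) : ℝ := Real.sqrt (trOp ((ContinuousLinearMap.adjoint F) ∘L F))

/-- The Hilbert--Schmidt inner product `⟨F, G⟩₂ = tr (F*G)`. -/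
def hsInner (F G : H →L[ℝ] H) : ℝ := trOp ((ContinuousLinearMap.adjoint F) ∘L G)

/-- `F` is a trace-class operator. -/
def IsTraceClass (F : H →L[ℝ] H) : Prop :=
  Summable (fun i : basisIndex H => ⟪absOp F (hbasis H i), hbasis H i⟫)

/-- `F` is a Hilbert--Schmidt operator. -/
def IsHS (F : H →L[ℝ] H) : Prop :=
  Summable (fun i : basisIndex H => ⟪((ContinuousLinearMap.adjoint F) ∘L F) (hbasis H i), hbasis H i⟫)

/-- Membership in `𝒦(H)`: non-negative (self-adjoint) and trace class. -/
def MemK (F : H →L[ℝ] H) : Prop := F.IsPositive ∧ IsTraceClass F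

/-- `F ≻ 0`: `F` is regular (strictly positive definite). -/
def PosDef (F : H →L[ℝ] H) : Prop := IsSelfAdjoint F ∧ ∀ h : H, h ≠ 0 → 0 < ⟪F h, h⟫

/-- Loewner partial order `F ⪯ G`. -/
def Loewner (F G : H →L[ℝ] H) : Prop := (G - F).IsPositive

/-- The Bures--Wasserstein distance. -/
def BWdist (F G : H →L[ℝ] H) : ℝ :=
  Real.sqrt (trOp F + trOp G - 2 * trOp (sqrtOp (sqrtOp G ∘L F ∘L sqrtOp G)))

/-- `T` is (the bounded extension of) the optimal transport map `T_F^G`,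
i.e. a non-negative operator with `F^{1/2} T F^{1/2} = (F^{1/2} G F^{1/2})^{1/2}`
and vanishing on the orthogonal complement of the range of `F`. -/
def IsOptMap (F G T : H →L[ℝ] H) : Prop :=
  T.IsPositive ∧ sqrtOp F ∘L T ∘L sqrtOp F = sqrtOp (sqrtOp F ∘L G ∘L sqrtOp F) ∧
    ∀ h : H, (∀ x : H, ⟪F x, h⟫ = 0) → T h = 0

/-- The optimal transport map `T_F^G` (junk value `0` if it does not exist boundedly). -/
def optMap (F G : H →L[ℝ] H) : H →L[ℝ] H := by
  classical exact if h : ∃ T : H →L[ℝ] H, IsOptMap F G T then h.choose else 0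

/-- The Borel σ-algebra generated by the Bures--Wasserstein distance. -/
def bwMS : MeasurableSpace (H →L[ℝ] H) :=
  MeasurableSpace.generateFrom {s | ∃ (G : H →L[ℝ] H) (r : ℝ), s = {F | BWdist F G < r}}

variable {Ω : Type*} [MeasurableSpace Ω]

/-- Measurability with respect to the Bures--Wasserstein Borel σ-algebra. -/
def BWMeasurable (X : Ω → H →L[ℝ] H) : Prop := @Measurable _ _ _ bwMS X

/-- `X` is a random element of `(𝒦, Π)`. -/
def IsRandomK (P : Measure Ω) (X : Ω → H →L[ℝ] H) : Prop :=
  BWMeasurable X ∧ ∀ᵐ ω ∂P, MemK (X ω)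

/-- The Fréchet functional `F ↦ 𝔼[Π(X, F)²]` (with values in `[0,∞]`). -/
def frechetFn (P : Measure Ω) (X : Ω → H →L[ℝ] H) (F : H →L[ℝ] H) : ℝ≥0∞ :=
  ∫⁻ ω, ENNReal.ofReal ((BWdist (X ω) F) ^ 2) ∂P

/-- `Ξ` is a (population) Fréchet mean (barycentre) of `X`. -/
def IsFrechetMean (P : Measure Ω) (X : Ω → H →L[ℝ] H) (Ξ : H →L[ℝ] H) : Prop :=
  MemK Ξ ∧ frechetFn P X Ξ ≠ ⊤ ∧ ∀ F : H →L[ℝ] H, MemK F → frechetFn P X Ξ ≤ frechetFn P X F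

/-- `Ξ` is an empirical Fréchet mean of `Sig 0, …, Sig (n-1)`. -/
def IsEmpFrechetMean (Sig : ℕ → H →L[ℝ] H) (n : ℕ) (Ξ : H →L[ℝ] H) : Prop :=
  MemK Ξ ∧ ∀ F : H →L[ℝ] H, MemK F →
    ∑ i ∈ Finset.range n, (BWdist (Sig i) Ξ) ^ 2 ≤ ∑ i ∈ Finset.range n, (BWdist (Sig i) F) ^ 2

/-- `Sig` is a sequence of i.i.d. random elements of `(𝒦, Π)`. -/
def IsIIDSample (P : Measure Ω) (Sig : ℕ → Ω → H →L[ℝ] H) : Prop :=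
  (∀ i, BWMeasurable (Sig i)) ∧
    ProbabilityTheory.iIndepFun (m := fun _ : ℕ => bwMS) Sig P ∧
    ∀ i j : ℕ, @ProbabilityTheory.IdentDistrib Ω Ω (H →L[ℝ] H) _ _ bwMS (Sig i) (Sig j) P P

/-- Assumption A(1): `𝔼 ‖Σ‖₁ < ∞`. -/
def A1 (P : Measure Ω) (X : Ω → H →L[ℝ] H) : Prop :=
  ∫⁻ ω, ENNReal.ofReal (traceNorm (X ω)) ∂P ≠ ⊤

/-- Assumption A(2): `ℙ(Σ ≻ 0) > 0`. -/
def A2 (P : Measure Ω) (X : Ω → H →L[ℝ] H) : Prop := 0 < P {ω | PosDef (X ω)}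

/-- Assumption B(1): the optimal maps `T_Ξ^Σ` exist boundedly a.s. and `𝔼 ‖T_Ξ^Σ‖_∞ < ∞`. -/
def B1 (P : Measure Ω) (X : Ω → H →L[ℝ] H) (Ξ : H →L[ℝ] H) : Prop :=
  (∀ᵐ ω ∂P, ∃ T : H →L[ℝ] H, IsOptMap Ξ (X ω) T) ∧
    Integrable (fun ω => optMap Ξ (X ω)) P

/-- Assumption B(2): `ℙ(εR ⪯ Σ ⪯ ε⁻¹R) = 1` for some `R ∈ 𝒦` and `ε > 0`. -/
def B2 (P : Measure Ω) (X : Ω → H →L[ℝ] H) : Prop :=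
  ∃ (R : H →L[ℝ] H) (ε : ℝ), MemK R ∧ 0 < ε ∧
    ∀ᵐ ω ∂P, Loewner (ε • R) (X ω) ∧ Loewner (X ω) (ε⁻¹ • R)

/-- The Borel σ-algebra generated by the Hilbert--Schmidt distance. -/
def hsMS : MeasurableSpace (H →L[ℝ] H) :=
  MeasurableSpace.generateFrom {s | ∃ (G : H →L[ℝ] H) (r : ℝ), s = {F | hsNorm (F - G) < r}}

/-- The sequence of random operators `Xn` converges weakly (in distribution) to a centred
Gaussian random element of the Hilbert space `ℬ₂` of Hilbert--Schmidt operators: there is a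
limiting probability measure, concentrated on the Hilbert--Schmidt operators, all of whose
one-dimensional projections are centred Gaussians, such that integrals of bounded,
`‖·‖₂`-continuous test functions converge. -/
def ConvWeakGaussianHS (P : Measure Ω) (Xn : ℕ → Ω → H →L[ℝ] H) : Prop :=
  letI : MeasurableSpace (H →L[ℝ] H) := hsMS
  ∃ γ : Measure (H →L[ℝ] H), IsProbabilityMeasure γ ∧
    γ {B | IsHS B} = 1 ∧
    (∀ A : H →L[ℝ] H, IsHS A → ∃ v : ℝ≥0,
      γ.map (fun B => hsInner A B) = ProbabilityTheory.gaussianReal 0 v) ∧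
    ∀ f : (H →L[ℝ] H) → ℝ,
      (∃ M : ℝ, ∀ B, |f B| ≤ M) →
      (∀ B : H →L[ℝ] H, ∀ ε : ℝ, 0 < ε → ∃ δ : ℝ, 0 < δ ∧
        ∀ B' : H →L[ℝ] H, hsNorm (B' - B) < δ → |f B' - f B| < ε) →
      Tendsto (fun n => ∫ ω, f (Xn n ω) ∂P) atTop (𝓝 (∫ B, f B ∂γ))

/-- The empirical fixed-point functional `φₙ`. -/
def phiFix (n : ℕ) (Sig : ℕ → H →L[ℝ] H) (F : H →L[ℝ] H) : H →L[ℝ] H :=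
  ((1 / (n : ℝ)) • ∑ j ∈ Finset.range n, sqrtOp (sqrtOp F ∘L Sig j ∘L sqrtOp F)) - F


/-- Lemma 5: if with positive probability `Σ ≻ 0` and the optimal map `T_Ξ^Σ` is invertible
with bounded inverse, then the Fréchet mean `Ξ` is regular. -/
theorem statement14
    {H : Type*} [NormedAddCommGroup H] [InnerProductSpace ℝ H] [CompleteSpace H]
    [TopologicalSpace.SeparableSpace H]
    {Ω : Type*} [MeasurableSpace Ω] (P : Measure Ω) [IsProbabilityMeasure P]
    (X : Ω → H →L[ℝ] H) (hX : IsRandomK P X)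
    (Xi : H →L[ℝ] H) (hXi : IsFrechetMean P X Xi)
    (huniq : ∀ Xi' : H →L[ℝ] H, IsFrechetMean P X Xi' → Xi' = Xi)
    (hpos : 0 < P {ω | PosDef (X ω) ∧ ∃ T : H →L[ℝ] H, IsOptMap Xi (X ω) T ∧
      Function.Surjective T ∧ ∃ c : ℝ, 0 < c ∧ ∀ h : H, c * ‖h‖ ≤ ‖T h‖}) :
    PosDef Xi := by
  obtain ⟨⟨hXiPos, -⟩, -, -⟩ := hXi
  have hne : {ω | PosDef (X ω) ∧ ∃ T : H →L[ℝ] H, IsOptMap Xi (X ω) T ∧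
      Function.Surjective T ∧ ∃ c : ℝ, 0 < c ∧ ∀ h : H, c * ‖h‖ ≤ ‖T h‖}.Nonempty := by
    rcases Set.eq_empty_or_nonempty {ω | PosDef (X ω) ∧ ∃ T : H →L[ℝ] H, IsOptMap Xi (X ω) T ∧
      Function.Surjective T ∧ ∃ c : ℝ, 0 < c ∧ ∀ h : H, c * ‖h‖ ≤ ‖T h‖} with h | h
    · rw [h] at hpos; simp at hpos
    · exact h
  obtain ⟨ω, -, T, hT, -, c, hc, hcT⟩ := hne
  have hsa : IsSelfAdjoint Xi := hXiPos.isSelfAdjoint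
  refine ⟨hsa, fun h hh => ?_⟩
  have hnn : ∀ x : H, 0 ≤ ⟪Xi x, x⟫ := by
    intro x
    have := hXiPos.2 x
    simpa [ContinuousLinearMap.reApplyInnerSelf_apply] using this
  by_contra hle
  push_neg at hle
  have h0 : ⟪Xi h, h⟫ = 0 := le_antisymm hle (hnn h)
  have hsym : ∀ x : H, ⟪Xi h, x⟫ = ⟪Xi x, h⟫ := by
    intro x
    rw [hsa.isSymmetric.apply_clm h x, real_inner_comm]
  have hk : ∀ x : H, ⟪Xi x, h⟫ = 0 := by
    intro x
    by_contra ha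
    set a := ⟪Xi x, h⟫ with ha_def
    set C := ⟪Xi x, x⟫ with hC_def
    have hC : 0 ≤ C := hnn x
    have key : ∀ t : ℝ, 0 ≤ C + 2 * t * a := by
      intro t
      have hq := hnn (x + t • h)
      have hexp : ⟪Xi (x + t • h), x + t • h⟫ = C + 2 * t * a := by
        rw [map_add, ContinuousLinearMap.map_smul]
        simp only [inner_add_left, inner_add_right, inner_smul_left, inner_smul_right,
          RCLike.conj_to_real]
        rw [hsym x, h0]
        ring
      rw [hexp] at hq
      exact hq
    rcases lt_or_gt_of_ne ha with haneg | hapos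
    · have := key ((C + 1) / (-2 * a))
      have h2a : (-2 * a) ≠ 0 := by positivity
      rw [show 2 * ((C + 1) / (-2 * a)) * a = -(C + 1) by field_simp] at this
      linarith
    · have := key (-(C + 1) / (2 * a))
      have h2a : (2 * a) ≠ 0 := by positivity
      rw [show 2 * (-(C + 1) / (2 * a)) * a = -(C + 1) by field_simp] at this
      linarith
  have hT0 : T h = 0 := hT.2.2 h hk
  have hb := hcT h
  rw [hT0, norm_zero] at hb
  have : 0 < ‖h‖ := norm_pos_iff.mpr hh
  nlinarith

end BuresWasserstein
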